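/- Let ζ be a nonnegative real random variable with a continuous density f that is symmetric about its mean μ > 0 (i.e., f(μ + t) = f(μ − t) for all t), and let α, ᾱ_B, ᾱ_S satisfy ᾱ_S < α < ᾱ_B. Define F(G) = E[C*(G)] where C*(G) = (α − ᾱ_B)·G + ᾱ_B·ζ when G ≤ ζ and C*(G) = (α − ᾱ_S)·G + ᾱ_S·ζ when G > ζ. Then F is convex, and its (sub)derivative at G = μ equals (2α − ᾱ_S − ᾱ_B)·P(ζ > μ). Consequently: if α = (ᾱ_B + ᾱ_S)/2 then G* = μ minimizes F; if α > (ᾱ_B + ᾱ_S)/2 then every minimizer satisfies G* < μ; and if α < (ᾱ_B + ᾱ_S)/2 then every minimizer satisfies G* > μ. -/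

import Mathlib

open MeasureTheory

private lemma tail_hasDeriv {g : ℝ → ℝ} (hc : Continuous g) (hi : Integrable g) (G : ℝ) :
    HasDerivAt (fun y => ∫ x in Set.Ioi y, g x) (-g G) G := by
  have key : ∀ y : ℝ, (∫ x in Set.Ioi y, g x)
      = ((∫ x, g x) - (∫ x in Set.Iic (0:ℝ), g x)) - ∫ x in (0:ℝ)..y, g x := by
    intro y
    have h1 : (∫ x in Set.Iic y, g x) + ∫ x in Set.Ioi y, g x = ∫ x, g x :=
      intervalIntegral.integral_Iic_add_Ioi hi.integrableOn hi.integrableOn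
    have h2 : (∫ x in Set.Iic y, g x) - ∫ x in Set.Iic (0:ℝ), g x = ∫ x in (0:ℝ)..y, g x :=
      intervalIntegral.integral_Iic_sub_Iic hi.integrableOn hi.integrableOn
    linarith
  have hd : HasDerivAt (fun y => ∫ x in (0:ℝ)..y, g x) (g G) G :=
    intervalIntegral.integral_hasDerivAt_right hi.intervalIntegrable
      (hc.stronglyMeasurable.stronglyMeasurableAtFilter) hc.continuousAt
  have h3 : HasDerivAt
      (fun y => ((∫ x, g x) - (∫ x in Set.Iic (0:ℝ), g x)) - ∫ x in (0:ℝ)..y, g x) (-g G) G := by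
    have h := (hasDerivAt_const G ((∫ x, g x) - ∫ x in Set.Iic (0:ℝ), g x)).sub hd
    rw [zero_sub] at h
    exact h
  exact h3.congr_of_eventuallyEq (Filter.Eventually.of_forall key)

theorem stmt3 (α αB αS μ : ℝ) (f : ℝ → ℝ)
    (hf_cont : Continuous f) (hf_nonneg : ∀ x, 0 ≤ f x) (hf_neg : ∀ x < (0:ℝ), f x = 0)
    (hf_int : Integrable f) (hxf_int : Integrable (fun x => x * f x))
    (hf_prob : ∫ x, f x = 1) (hmean : ∫ x, x * f x = μ) (hμ : 0 < μ)
    (hsym : ∀ t, f (μ + t) = f (μ - t))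
    (h1 : αS < α) (h2 : α < αB)
    (F : ℝ → ℝ)
    (hF : ∀ G, F G = ∫ x, (if G ≤ x then (α - αB) * G + αB * x
                            else (α - αS) * G + αS * x) * f x) :
    ConvexOn ℝ (Set.Ici 0) F ∧
    HasDerivAt F ((2 * α - αS - αB) * ∫ x in Set.Ioi μ, f x) μ ∧
    (α = (αB + αS) / 2 → IsMinOn F (Set.Ici 0) μ) ∧
    (α > (αB + αS) / 2 → ∀ G ∈ Set.Ici (0:ℝ), IsMinOn F (Set.Ici 0) G → G < μ) ∧
    (α < (αB + αS) / 2 → ∀ G ∈ Set.Ici (0:ℝ), IsMinOn F (Set.Ici 0) G → μ < G) := by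
  have hBS : (0:ℝ) < αB - αS := by linarith
  set φ : ℝ → ℝ := fun y => ∫ x in Set.Ioi y, f x with hφdef
  set ψ : ℝ → ℝ := fun y => ∫ x in Set.Ioi y, x * f x with hψdef
  have hφd : ∀ G, HasDerivAt φ (-f G) G := tail_hasDeriv hf_cont hf_int
  have hψd : ∀ G, HasDerivAt ψ (-(G * f G)) G := fun G =>
    tail_hasDeriv (continuous_id.mul hf_cont) hxf_int G
  -- indicator form of the kink function
  have e1 : ∀ G : ℝ, (fun x => (if G ≤ x then x - G else 0) * f x)
      = Set.indicator (Set.Ici G) (fun x => x * f x - G * f x) := by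
    intro G; funext x
    by_cases h : G ≤ x
    · rw [if_pos h, Set.indicator_of_mem (Set.mem_Ici.mpr h)]; ring
    · rw [if_neg h, Set.indicator_of_notMem (by simpa using h), zero_mul]
  have hind : ∀ G : ℝ, Integrable (fun x => (if G ≤ x then x - G else 0) * f x) := by
    intro G
    rw [e1 G]
    exact (hxf_int.sub (hf_int.const_mul G)).indicator measurableSet_Ici
  have hHval : ∀ G : ℝ, (∫ x, (if G ≤ x then x - G else 0) * f x) = ψ G - G * φ G := by
    intro G
    rw [e1 G, integral_indicator measurableSet_Ici, integral_Ici_eq_integral_Ioi,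
      integral_sub hxf_int.integrableOn ((hf_int.const_mul G).integrableOn),
      integral_const_mul]
  -- closed form for F
  have hFeq : ∀ G : ℝ, F G = (α - αS) * G + αS * μ + (αB - αS) * (ψ G - G * φ G) := by
    intro G
    have split : (fun x => (if G ≤ x then (α - αB) * G + αB * x
          else (α - αS) * G + αS * x) * f x)
        = fun x => (((α - αS) * G) * f x + αS * (x * f x))
            + (αB - αS) * ((if G ≤ x then x - G else 0) * f x) := by
      funext x
      by_cases h : G ≤ x
      · rw [if_pos h, if_pos h]; ring
      · rw [if_neg h, if_neg h]; ring
    have iA : Integrable (fun x => ((α - αS) * G) * f x + αS * (x * f x)) :=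
      (hf_int.const_mul _).add (hxf_int.const_mul _)
    have iB : Integrable (fun x => (αB - αS) * ((if G ≤ x then x - G else 0) * f x)) :=
      (hind G).const_mul _
    rw [hF G, split, integral_add iA iB,
      integral_add (hf_int.const_mul _) (hxf_int.const_mul _),
      integral_const_mul, integral_const_mul, integral_const_mul,
      hf_prob, hmean, hHval G]
    ring
  -- derivative of F everywhere
  have hFd : ∀ G, HasDerivAt F ((α - αS) - (αB - αS) * φ G) G := by
    intro G
    have hmul : HasDerivAt (fun y => y * φ y) (1 * φ G + G * (-f G)) G :=
      (hasDerivAt_id G).mul (hφd G)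
    have h1' := ((hψd G).sub hmul).const_mul (αB - αS)
    have h2' := (((hasDerivAt_id G).const_mul (α - αS)).add_const (αS * μ)).add h1'
    have h3' := h2'.congr_of_eventuallyEq
      (Filter.Eventually.of_forall (fun y => by simpa using hFeq y))
    convert h3' using 1
    · rfl
    · rfl
    ring
  -- symmetry gives φ μ = 1/2
  have hrefl : ∀ x : ℝ, f (2*μ - x) = f x := by
    intro x
    have h := hsym (μ - x)
    rw [show μ + (μ - x) = 2*μ - x by ring, show μ - (μ - x) = x by ring] at h
    exact h
  have hmirror : (∫ x in Set.Ioi μ, f x) = ∫ x in Set.Iio μ, f x := by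
    have h1' : (fun x => Set.indicator (Set.Iio μ) f (2*μ - x))
        = Set.indicator (Set.Ioi μ) f := by
      funext x
      by_cases h : x ∈ Set.Ioi μ
      · have hm : 2*μ - x ∈ Set.Iio μ := by
          simp only [Set.mem_Ioi] at h; simp only [Set.mem_Iio]; linarith
        rw [Set.indicator_of_mem hm, Set.indicator_of_mem h, hrefl]
      · have hm : 2*μ - x ∉ Set.Iio μ := by
          simp only [Set.mem_Ioi, not_lt] at h; simp only [Set.mem_Iio, not_lt]; linarith
        rw [Set.indicator_of_notMem hm, Set.indicator_of_notMem h]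
    calc (∫ x in Set.Ioi μ, f x) = ∫ x, Set.indicator (Set.Ioi μ) f x :=
          (integral_indicator measurableSet_Ioi).symm
      _ = ∫ x, Set.indicator (Set.Iio μ) f (2*μ - x) := by rw [h1']
      _ = ∫ x, Set.indicator (Set.Iio μ) f (-x + 2*μ) := by
          congr 1; funext x; rw [show 2*μ - x = -x + 2*μ by ring]
      _ = ∫ x, Set.indicator (Set.Iio μ) f (x + 2*μ) :=
          integral_neg_eq_self (fun x => Set.indicator (Set.Iio μ) f (x + 2*μ)) volume
      _ = ∫ x, Set.indicator (Set.Iio μ) f x :=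
          integral_add_right_eq_self (Set.indicator (Set.Iio μ) f) (2*μ)
      _ = ∫ x in Set.Iio μ, f x := integral_indicator measurableSet_Iio
  have hphalf : φ μ = 1/2 := by
    have hA : (∫ x in Set.Iic μ, f x) + ∫ x in Set.Ioi μ, f x = ∫ x, f x :=
      intervalIntegral.integral_Iic_add_Ioi hf_int.integrableOn hf_int.integrableOn
    have hB : (∫ x in Set.Iic μ, f x) = ∫ x in Set.Iio μ, f x :=
      integral_Iic_eq_integral_Iio
    rw [hf_prob, hB, ← hmirror] at hA
    show (∫ x in Set.Ioi μ, f x) = 1/2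
    linarith
  -- antitonicity of φ
  have hφanti : Antitone φ := by
    intro a b hab
    exact setIntegral_mono_set hf_int.integrableOn
      (Filter.Eventually.of_forall (fun x => hf_nonneg x))
      (HasSubset.Subset.eventuallyLE (Set.Ioi_subset_Ioi hab))
  -- convexity
  have hconv : ConvexOn ℝ (Set.Ici 0) F := by
    have hmono : MonotoneOn (deriv F) (interior (Set.Ici (0:ℝ))) := by
      intro a _ b _ hab
      rw [(hFd a).deriv, (hFd b).deriv]
      have h := hφanti hab
      nlinarith
    exact hmono.convexOn_of_deriv (convex_Ici 0)
      (fun x _ => (hFd x).continuousAt.continuousWithinAt)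
      (fun x _ => (hFd x).differentiableAt.differentiableWithinAt)
  -- global support line at μ
  have hsupport : ∀ y : ℝ, F μ + (y - μ) * ((2*α - αS - αB) * (1/2)) ≤ F y := by
    intro y
    have hpt : ∀ x, (if μ ≤ x then x - μ else 0) * f x
        - (y - μ) * Set.indicator (Set.Ioi μ) f x
        ≤ (if y ≤ x then x - y else 0) * f x := by
      intro x
      by_cases hx : x ∈ Set.Ioi μ
      · rw [Set.indicator_of_mem hx]
        simp only [Set.mem_Ioi] at hx
        rw [if_pos hx.le]
        by_cases hy : y ≤ x
        · rw [if_pos hy]; exact le_of_eq (by ring)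
        · rw [if_neg hy]
          push_neg at hy
          nlinarith [hf_nonneg x]
      · rw [Set.indicator_of_notMem hx]
        simp only [Set.mem_Ioi, not_lt] at hx
        have hL : (if μ ≤ x then x - μ else 0) * f x = 0 := by
          by_cases h : μ ≤ x
          · rw [if_pos h]
            have : x = μ := le_antisymm hx h
            simp [this]
          · rw [if_neg h, zero_mul]
        rw [hL, mul_zero, sub_zero]
        by_cases hy : y ≤ x
        · rw [if_pos hy]; exact mul_nonneg (by linarith) (hf_nonneg x)
        · rw [if_neg hy, zero_mul]
    have iInd : Integrable (fun x => (y - μ) * Set.indicator (Set.Ioi μ) f x) :=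
      (hf_int.indicator measurableSet_Ioi).const_mul _
    have iSub : Integrable (fun x => (if μ ≤ x then x - μ else 0) * f x
        - (y - μ) * Set.indicator (Set.Ioi μ) f x) := (hind μ).sub iInd
    have hmono := integral_mono iSub (hind y) hpt
    rw [integral_sub (hind μ) iInd, integral_const_mul,
      integral_indicator measurableSet_Ioi, hHval μ, hHval y] at hmono
    have hA : (0:ℝ) ≤ (αB - αS) *
        ((ψ y - y * φ y) - (ψ μ - μ * φ μ) + (y - μ) * (1/2)) := by
      apply mul_nonneg hBS.le
      have h0 : (∫ x in Set.Ioi μ, f x) = φ μ := rfl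
      rw [h0, hphalf] at hmono
      rw [hphalf]
      linarith
    rw [hFeq y, hFeq μ]
    linarith [hA]
  refine ⟨hconv, ?_, ?_, ?_, ?_⟩
  · have hval : (2 * α - αS - αB) * (∫ x in Set.Ioi μ, f x)
        = (α - αS) - (αB - αS) * φ μ := by
      have : (∫ x in Set.Ioi μ, f x) = φ μ := rfl
      rw [this, hphalf]; ring
    rw [hval]; exact hFd μ
  · intro hα
    rw [isMinOn_iff]
    intro y _
    have := hsupport y
    rw [hα] at this
    calc F μ = F μ + (y - μ) * ((2 * ((αB + αS) / 2) - αS - αB) * (1/2)) := by ring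
      _ ≤ F y := this
  · intro hα G hG hmin
    by_contra hc
    push_neg at hc
    have hd : (0:ℝ) < (2*α - αS - αB) * (1/2) := by linarith
    rcases lt_or_eq_of_le hc with hlt | heq
    · -- μ < G : F μ < F G contradicts minimality at G
      have h1' := hsupport G
      have h2' : F G ≤ F μ := isMinOn_iff.mp hmin μ (Set.mem_Ici.mpr hμ.le)
      nlinarith
    · -- G = μ : derivative positive at μ, find point below with smaller value
      subst heq
      have hdpos : 0 < (α - αS) - (αB - αS) * φ μ := by
        rw [hphalf]; linarith
      have hslope := hasDerivAt_iff_tendsto_slope.mp (hFd μ)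
      have hev : ∀ᶠ z in nhdsWithin μ {μ}ᶜ, 0 < slope F μ z :=
        hslope.eventually (eventually_gt_nhds hdpos)
      have hev2 : ∀ᶠ z in nhdsWithin μ (Set.Iio μ), 0 < slope F μ z :=
        hev.filter_mono (nhdsWithin_mono μ (fun z hz => by
          simp only [Set.mem_Iio] at hz
          simp only [Set.mem_compl_iff, Set.mem_singleton_iff]
          exact ne_of_lt hz))
      have hev3 : ∀ᶠ z in nhdsWithin μ (Set.Iio μ), 0 < z :=
        eventually_nhdsWithin_of_eventually_nhds (eventually_gt_nhds hμ)
      have hev4 : ∀ᶠ z in nhdsWithin μ (Set.Iio μ), z < μ :=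
        eventually_mem_nhdsWithin
      obtain ⟨z, hz1, hz2, hz3⟩ := (hev2.and (hev3.and hev4)).exists
      rw [slope_def_field] at hz1
      have hden : z - μ < 0 := by linarith [hz3]
      have hnum : F z - F μ < 0 := by
        by_contra hn
        push_neg at hn
        have h0 : (F z - F μ) / (z - μ) ≤ 0 :=
          div_nonpos_of_nonneg_of_nonpos hn hden.le
        linarith
      have hle : F μ ≤ F z := isMinOn_iff.mp hmin z (Set.mem_Ici.mpr hz2.le)
      linarith
  · intro hα G hG hmin
    by_contra hc
    push_neg at hc
    have hd : (2*α - αS - αB) * (1/2) < 0 := by linarith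
    rcases lt_or_eq_of_le hc with hlt | heq
    · have h1' := hsupport G
      have h2' : F G ≤ F μ := isMinOn_iff.mp hmin μ (Set.mem_Ici.mpr hμ.le)
      nlinarith
    · subst heq
      have hdneg : (α - αS) - (αB - αS) * φ G < 0 := by
        rw [hphalf]; linarith
      have hslope := hasDerivAt_iff_tendsto_slope.mp (hFd G)
      have hev : ∀ᶠ z in nhdsWithin G {G}ᶜ, slope F G z < 0 :=
        hslope.eventually (eventually_lt_nhds hdneg)
      have hev2 : ∀ᶠ z in nhdsWithin G (Set.Ioi G), slope F G z < 0 :=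
        hev.filter_mono (nhdsWithin_mono G (fun z hz => by
          simp only [Set.mem_Ioi] at hz
          simp only [Set.mem_compl_iff, Set.mem_singleton_iff]
          exact ne_of_gt hz))
      have hev4 : ∀ᶠ z in nhdsWithin G (Set.Ioi G), G < z :=
        eventually_mem_nhdsWithin
      obtain ⟨z, hz1, hz3⟩ := (hev2.and hev4).exists
      rw [slope_def_field] at hz1
      have hden : 0 < z - G := by linarith
      have hnum : F z - F G < 0 := by
        rcases div_neg_iff.mp hz1 with ⟨ha, hb⟩ | ⟨ha, hb⟩
        · linarith
        · linarith
      have hle : F G ≤ F z := isMinOn_iff.mp hmin z (Set.mem_Ici.mpr (by linarith : (0:ℝ) ≤ z))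
      linarith
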